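/- Let r, s ≥ 3 be integers with r odd and s even. If the pair (Γ(r,s), H(r,s)) is basic of cycle type, then (r,s) = (p,4) or (p,2q) for some odd primes p and q. -/

import Mathlib

open SimpleGraph

namespace OG4

variable {V : Type*} {W : Type*}

/-! ### Normal quotients, cycles, and basic pairs -/

/-- The setoid of orbits of a group `N` of permutations of `V`. -/
def orbitSetoid (N : Subgroup (Equiv.Perm V)) : Setoid V := MulAction.orbitRel N V

/-- The (normal) quotient graph of a graph `Γ` with respect to a group `N` of permutations:
its vertices are the `N`-orbits, two distinct orbits being adjacent iff some vertex of one is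
adjacent in `Γ` to some vertex of the other. -/
def quotientGraph (Γ : SimpleGraph V) (N : Subgroup (Equiv.Perm V)) :
    SimpleGraph (Quotient (orbitSetoid N)) :=
  SimpleGraph.fromRel fun a b =>
    ∃ x y : V, Quotient.mk (orbitSetoid N) x = a ∧ Quotient.mk (orbitSetoid N) y = b ∧ Γ.Adj x y

/-- `N` is a normal subgroup of the subgroup `G` (of some ambient group). -/
def NormalIn {G : Type*} [Group G] (N H : Subgroup G) : Prop :=
  N ≤ H ∧ ∀ h ∈ H, ∀ n ∈ N, h * n * h⁻¹ ∈ N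

/-- A graph is isomorphic to a cycle graph `C_m` for some `m ≥ 3`. -/
def IsoCycle (Δ : SimpleGraph W) : Prop :=
  ∃ m : ℕ, 3 ≤ m ∧ Nonempty (Δ ≃g SimpleGraph.cycleGraph m)

/-- Every normal quotient of `(Γ, G)` relative to a nontrivial normal subgroup is degenerate:
it has at most 2 vertices or is a cycle. -/
def IsBasic (Γ : SimpleGraph V) (G : Subgroup (Equiv.Perm V)) : Prop :=
  ∀ N : Subgroup (Equiv.Perm V), NormalIn N G → N ≠ ⊥ →
    Nat.card (Quotient (orbitSetoid N)) ≤ 2 ∨ IsoCycle (quotientGraph Γ N)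

/-- `(Γ, G)` is basic of cycle type. -/
def BasicOfCycleType (Γ : SimpleGraph V) (G : Subgroup (Equiv.Perm V)) : Prop :=
  IsBasic Γ G ∧
    ∃ N : Subgroup (Equiv.Perm V), NormalIn N G ∧ N ≠ ⊥ ∧ IsoCycle (quotientGraph Γ N)

/-- The kernel of the action of `G` on the set of `N`-orbits. -/
def orbitKernel (G N : Subgroup (Equiv.Perm V)) : Subgroup (Equiv.Perm V) where
  carrier := {g | g ∈ G ∧ ∀ x : V,
    Quotient.mk (orbitSetoid N) (g x) = Quotient.mk (orbitSetoid N) x}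
  one_mem' := ⟨G.one_mem, fun x => by simp⟩
  mul_mem' := by
    rintro a b ⟨haG, ha⟩ ⟨hbG, hb⟩
    refine ⟨G.mul_mem haG hbG, fun x => ?_⟩
    rw [Equiv.Perm.mul_apply, ha (b x), hb x]
  inv_mem' := by
    rintro a ⟨haG, ha⟩
    refine ⟨G.inv_mem haG, fun x => ?_⟩
    have h := ha (a⁻¹ x)
    rw [← Equiv.Perm.mul_apply, mul_inv_cancel, Equiv.Perm.one_apply] at h
    exact h.symm

/-- `(Γ, G)` has a pair of independent cyclic normal quotients. -/
def HasIndepCyclicQuotients (Γ : SimpleGraph V) (G : Subgroup (Equiv.Perm V)) : Prop :=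
  ∃ N M : Subgroup (Equiv.Perm V), NormalIn N G ∧ NormalIn M G ∧
    IsoCycle (quotientGraph Γ N) ∧ IsoCycle (quotientGraph Γ M) ∧
    ¬ IsoCycle (quotientGraph Γ (orbitKernel G N ⊓ orbitKernel G M))

/-- `(Γ, G)` is basic of independent-cycle type. -/
def BasicOfIndependentCycleType (Γ : SimpleGraph V) (G : Subgroup (Equiv.Perm V)) : Prop :=
  IsBasic Γ G ∧ HasIndepCyclicQuotients Γ G

/-- Isomorphism of graph-group pairs: a graph isomorphism conjugating one group onto the other. -/
def PairIso (Γ : SimpleGraph V) (G : Subgroup (Equiv.Perm V))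
    (Δ : SimpleGraph W) (H : Subgroup (Equiv.Perm W)) : Prop :=
  ∃ e : Γ ≃g Δ, ∀ h : Equiv.Perm W, h ∈ H ↔ ∃ g ∈ G, e.toEquiv.permCongr g = h

/-! ### Minimal normal subgroups -/

/-- `M` is a minimal normal subgroup of the ambient group. -/
def IsMinimalNormal {G : Type*} [Group G] (M : Subgroup G) : Prop :=
  M.Normal ∧ M ≠ ⊥ ∧ ∀ N : Subgroup G, N.Normal → N ≤ M → N = ⊥ ∨ N = M

/-- `M` is a minimal normal subgroup of the subgroup `H`. -/
def IsMinimalNormalIn {G : Type*} [Group G] (M H : Subgroup G) : Prop :=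
  NormalIn M H ∧ M ≠ ⊥ ∧ ∀ N : Subgroup G, NormalIn N H → N ≤ M → N = ⊥ ∨ N = M

/-! ### The graphs `Γ(r,s)` and their automorphisms -/

/-- In `Γ(r,s)`, the vertex `(i,j)` is joined to the four vertices `(i ± 1, j ± 1)`. -/
def gammaRel (r s : ℕ) (x y : ZMod r × ZMod s) : Prop :=
  (y.1 = x.1 + 1 ∨ y.1 = x.1 - 1) ∧ (y.2 = x.2 + 1 ∨ y.2 = x.2 - 1)

/-- The graph `Γ(r,s)` on `ℤ_r × ℤ_s`. -/
def Gamma (r s : ℕ) : SimpleGraph (ZMod r × ZMod s) := SimpleGraph.fromRel (gammaRel r s)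

/-- `μ : (i,j) ↦ (i+1, j)`. -/
def mu (r s : ℕ) : Equiv.Perm (ZMod r × ZMod s) :=
  (Equiv.addRight (1 : ZMod r)).prodCongr (Equiv.refl (ZMod s))

/-- `ν : (i,j) ↦ (i, j+1)`. -/
def nu (r s : ℕ) : Equiv.Perm (ZMod r × ZMod s) :=
  (Equiv.refl (ZMod r)).prodCongr (Equiv.addRight (1 : ZMod s))

/-- `σ : (i,j) ↦ (-i, j)`. -/
def sigma (r s : ℕ) : Equiv.Perm (ZMod r × ZMod s) :=
  (Equiv.neg (ZMod r)).prodCongr (Equiv.refl (ZMod s))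

/-- `τ : (i,j) ↦ (-i, -j)`. -/
def tau (r s : ℕ) : Equiv.Perm (ZMod r × ZMod s) :=
  (Equiv.neg (ZMod r)).prodCongr (Equiv.neg (ZMod s))

/-- `σν : (i,j) ↦ (-i, j+1)`. -/
def sigmaNu (r s : ℕ) : Equiv.Perm (ZMod r × ZMod s) :=
  (Equiv.neg (ZMod r)).prodCongr (Equiv.addRight (1 : ZMod s))

/-- `μν : (i,j) ↦ (i+1, j+1)`. -/
def muNu (r s : ℕ) : Equiv.Perm (ZMod r × ZMod s) :=
  (Equiv.addRight (1 : ZMod r)).prodCongr (Equiv.addRight (1 : ZMod s))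

/-- `σμν : (i,j) ↦ (-(i+1), j+1)`. -/
def sigmaMuNu (r s : ℕ) : Equiv.Perm (ZMod r × ZMod s) :=
  ((Equiv.addRight (1 : ZMod r)).trans (Equiv.neg (ZMod r))).prodCongr
    (Equiv.addRight (1 : ZMod s))

/-- `μ² : (i,j) ↦ (i+2, j)`. -/
def muSq (r s : ℕ) : Equiv.Perm (ZMod r × ZMod s) :=
  (Equiv.addRight (2 : ZMod r)).prodCongr (Equiv.refl (ZMod s))

/-- `ν² : (i,j) ↦ (i, j+2)`. -/
def nuSq (r s : ℕ) : Equiv.Perm (ZMod r × ZMod s) :=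
  (Equiv.refl (ZMod r)).prodCongr (Equiv.addRight (2 : ZMod s))

/-- `μ^k : (i,j) ↦ (i+k, j)`. -/
def muPow (r s k : ℕ) : Equiv.Perm (ZMod r × ZMod s) :=
  (Equiv.addRight ((k : ZMod r))).prodCongr (Equiv.refl (ZMod s))

/-- `μ^k ν² : (i,j) ↦ (i+k, j+2)`. -/
def muPowNuSq (r s k : ℕ) : Equiv.Perm (ZMod r × ZMod s) :=
  (Equiv.addRight ((k : ZMod r))).prodCongr (Equiv.addRight (2 : ZMod s))

/-- `G(r,s) = ⟨μ, ν, σ⟩`. -/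
def Ggroup (r s : ℕ) : Subgroup (Equiv.Perm (ZMod r × ZMod s)) :=
  Subgroup.closure {mu r s, nu r s, sigma r s}

/-- `H(r,s) = ⟨μ, σν, τ⟩`. -/
def Hgroup (r s : ℕ) : Subgroup (Equiv.Perm (ZMod r × ZMod s)) :=
  Subgroup.closure {mu r s, sigmaNu r s, tau r s}

/-! ### The graphs `Γ⁺(r,s)` (for `r`, `s` even) -/

/-- `X⁺`: the set of `(i,j)` with `i` and `j` of the same parity. -/
def XPlus (r s : ℕ) : Set (ZMod r × ZMod s) := {x | x.1.val % 2 = x.2.val % 2}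

/-- `Γ⁺(r,s)`, the subgraph of `Γ(r,s)` induced on `X⁺`. -/
def GammaPlus (r s : ℕ) : SimpleGraph (XPlus r s) :=
  SimpleGraph.induce (XPlus r s) (Gamma r s)

section parity

lemma val_add_one_mod_two (r : ℕ) (hr : 2 ∣ r) (hr0 : r ≠ 0) (i : ZMod r) :
    (i + 1).val % 2 = (i.val + 1) % 2 := by
  haveI : NeZero r := ⟨hr0⟩
  haveI : Fact (1 < r) := ⟨by have := Nat.le_of_dvd (Nat.pos_of_ne_zero hr0) hr; omega⟩
  rw [ZMod.val_add, Nat.mod_mod_of_dvd _ hr, ZMod.val_one]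

lemma val_add_two_mod_two (r : ℕ) (hr : 2 ∣ r) (hr0 : r ≠ 0) (i : ZMod r) :
    (i + 2).val % 2 = i.val % 2 := by
  have h1 := val_add_one_mod_two r hr hr0 i
  have h2 := val_add_one_mod_two r hr hr0 (i + 1)
  rw [show i + 1 + 1 = i + 2 by ring] at h2
  omega

lemma val_neg_mod_two (r : ℕ) (hr : 2 ∣ r) (hr0 : r ≠ 0) (i : ZMod r) :
    (-i).val % 2 = i.val % 2 := by
  haveI : NeZero r := ⟨hr0⟩
  rcases eq_or_ne i 0 with h | h
  · simp [h]
  · have h1 : (-i).val = r - i.val := by rw [ZMod.neg_val]; simp [h]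
    have h2 : i.val < r := ZMod.val_lt i
    have h3 : i.val ≠ 0 := fun hh => h ((ZMod.val_eq_zero i).mp hh)
    obtain ⟨t, rfl⟩ := hr
    rw [h1]
    omega

end parity

section plusPerms

variable (r s : ℕ)

/-- The restriction of `μ²` to `X⁺`. -/
def muSqP (hr : 2 ∣ r) (hr0 : r ≠ 0) : Equiv.Perm (XPlus r s) :=
  (muSq r s).subtypePerm (by
    intro x
    have h := val_add_two_mod_two r hr hr0 x.1
    simp only [XPlus, Set.mem_setOf_eq, muSq, Equiv.prodCongr_apply, Prod.map,
      Equiv.coe_addRight, Equiv.refl_apply]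
    omega)

/-- The restriction of `ν²` to `X⁺`. -/
def nuSqP (hs : 2 ∣ s) (hs0 : s ≠ 0) : Equiv.Perm (XPlus r s) :=
  (nuSq r s).subtypePerm (by
    intro x
    have h := val_add_two_mod_two s hs hs0 x.2
    simp only [XPlus, Set.mem_setOf_eq, nuSq, Equiv.prodCongr_apply, Prod.map,
      Equiv.coe_addRight, Equiv.refl_apply]
    omega)

/-- The restriction of `μν` to `X⁺`. -/
def muNuP (hr : 2 ∣ r) (hr0 : r ≠ 0) (hs : 2 ∣ s) (hs0 : s ≠ 0) : Equiv.Perm (XPlus r s) :=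
  (muNu r s).subtypePerm (by
    intro x
    have h1 := val_add_one_mod_two r hr hr0 x.1
    have h2 := val_add_one_mod_two s hs hs0 x.2
    simp only [XPlus, Set.mem_setOf_eq, muNu, Equiv.prodCongr_apply, Prod.map,
      Equiv.coe_addRight]
    omega)

/-- The restriction of `σ` to `X⁺`. -/
def sigmaP (hr : 2 ∣ r) (hr0 : r ≠ 0) : Equiv.Perm (XPlus r s) :=
  (sigma r s).subtypePerm (by
    intro x
    have h := val_neg_mod_two r hr hr0 x.1
    simp only [XPlus, Set.mem_setOf_eq, sigma, Equiv.prodCongr_apply, Prod.map,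
      Equiv.neg_apply, Equiv.refl_apply]
    omega)

/-- The restriction of `τ` to `X⁺`. -/
def tauP (hr : 2 ∣ r) (hr0 : r ≠ 0) (hs : 2 ∣ s) (hs0 : s ≠ 0) : Equiv.Perm (XPlus r s) :=
  (tau r s).subtypePerm (by
    intro x
    have h1 := val_neg_mod_two r hr hr0 x.1
    have h2 := val_neg_mod_two s hs hs0 x.2
    simp only [XPlus, Set.mem_setOf_eq, tau, Equiv.prodCongr_apply, Prod.map,
      Equiv.neg_apply]
    omega)

/-- The restriction of `σμν` to `X⁺`. -/
def sigmaMuNuP (hr : 2 ∣ r) (hr0 : r ≠ 0) (hs : 2 ∣ s) (hs0 : s ≠ 0) :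
    Equiv.Perm (XPlus r s) :=
  (sigmaMuNu r s).subtypePerm (by
    intro x
    have h1 := val_neg_mod_two r hr hr0 (x.1 + 1)
    have h2 := val_add_one_mod_two r hr hr0 x.1
    have h3 := val_add_one_mod_two s hs hs0 x.2
    simp only [XPlus, Set.mem_setOf_eq, sigmaMuNu, Equiv.prodCongr_apply, Prod.map,
      Equiv.trans_apply, Equiv.coe_addRight, Equiv.neg_apply]
    omega)

/-- `G⁺(r,s) = ⟨μ², μν, σ⟩` acting on `X⁺`. -/
def GPlusGroup (hr : 2 ∣ r) (hr0 : r ≠ 0) (hs : 2 ∣ s) (hs0 : s ≠ 0) :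
    Subgroup (Equiv.Perm (XPlus r s)) :=
  Subgroup.closure {muSqP r s hr hr0, muNuP r s hr hr0 hs hs0, sigmaP r s hr hr0}

/-- `H⁺(r,s) = ⟨μ², σμν, τ⟩` acting on `X⁺`. -/
def HPlusGroup (hr : 2 ∣ r) (hr0 : r ≠ 0) (hs : 2 ∣ s) (hs0 : s ≠ 0) :
    Subgroup (Equiv.Perm (XPlus r s)) :=
  Subgroup.closure
    {muSqP r s hr hr0, sigmaMuNuP r s hr hr0 hs hs0, tauP r s hr hr0 hs hs0}

end plusPerms

/-! ### The standard double cover `Γ₂(r,s)` -/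

/-- Adjacency of the double cover: `(i,j)_δ ~ (i ± 1, j ± 1)_{δ+1}`. -/
def gamma2Rel (r s : ℕ) (x y : (ZMod r × ZMod s) × ZMod 2) : Prop :=
  (y.1.1 = x.1.1 + 1 ∨ y.1.1 = x.1.1 - 1) ∧ (y.1.2 = x.1.2 + 1 ∨ y.1.2 = x.1.2 - 1) ∧
    y.2 = x.2 + 1

/-- `Γ₂(r,s)`, the standard double cover of `Γ(r,s)`. -/
def Gamma2 (r s : ℕ) : SimpleGraph ((ZMod r × ZMod s) × ZMod 2) :=
  SimpleGraph.fromRel (gamma2Rel r s)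

/-- `μ : (i,j)_δ ↦ (i+1, j)_δ` on the double cover. -/
def muD (r s : ℕ) : Equiv.Perm ((ZMod r × ZMod s) × ZMod 2) :=
  (mu r s).prodCongr (Equiv.refl (ZMod 2))

/-- `ν : (i,j)_δ ↦ (i, j+1)_δ` on the double cover. -/
def nuD (r s : ℕ) : Equiv.Perm ((ZMod r × ZMod s) × ZMod 2) :=
  (nu r s).prodCongr (Equiv.refl (ZMod 2))

/-- `σ : (i,j)_δ ↦ (i, -j)_{δ+1}` on the double cover. -/
def sigmaD (r s : ℕ) : Equiv.Perm ((ZMod r × ZMod s) × ZMod 2) :=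
  ((Equiv.refl (ZMod r)).prodCongr (Equiv.neg (ZMod s))).prodCongr
    (Equiv.addRight (1 : ZMod 2))

/-- `τ : (i,j)_δ ↦ (-i, -j)_δ` on the double cover. -/
def tauD (r s : ℕ) : Equiv.Perm ((ZMod r × ZMod s) × ZMod 2) :=
  (tau r s).prodCongr (Equiv.refl (ZMod 2))

/-- `G₂(r,s) = ⟨μ, ν, σ, τ⟩` on the double cover. -/
def G2group (r s : ℕ) : Subgroup (Equiv.Perm ((ZMod r × ZMod s) × ZMod 2)) :=
  Subgroup.closure {muD r s, nuD r s, sigmaD r s, tauD r s}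



/-! ### Auxiliary machinery -/

section Aux

variable {r s : ℕ}

/-- Translation by `v` as a permutation of `ZMod r × ZMod s`. -/
def T (r s : ℕ) (v : ZMod r × ZMod s) : Equiv.Perm (ZMod r × ZMod s) := Equiv.addRight v

lemma T_apply (v x : ZMod r × ZMod s) : T r s v x = x + v := rfl

lemma T_mul (v w : ZMod r × ZMod s) : T r s v * T r s w = T r s (v + w) :=
  Equiv.ext fun x => by
    simp only [Equiv.Perm.mul_apply, T_apply]
    rw [add_assoc, add_comm w v]

lemma T_one : T r s 0 = 1 := Equiv.ext fun x => by simp [T_apply]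

lemma T_inv (v : ZMod r × ZMod s) : (T r s v)⁻¹ = T r s (-v) :=
  inv_eq_of_mul_eq_one_right (by rw [T_mul, add_neg_cancel, T_one])

lemma T_pow (a : ZMod r) (b : ZMod s) (n : ℕ) :
    T r s (a, b) ^ n = T r s (n • a, n • b) := by
  induction n with
  | zero => simp [T_one]; exact T_one.symm
  | succ n ih =>
      rw [pow_succ, ih, T_mul, Prod.mk_add_mk, ← succ_nsmul, ← succ_nsmul]

lemma mu_eq : mu r s = T r s (1, 0) :=
  Equiv.ext fun x => by
    simp [mu, T_apply, Prod.ext_iff]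

lemma sigmaNu_sq : sigmaNu r s * sigmaNu r s = T r s (0, 2) :=
  Equiv.ext fun x => by
    simp [sigmaNu, T_apply, Equiv.Perm.mul_apply, Prod.ext_iff]
    ring

lemma sigmaNu_T_mul (v : ZMod r × ZMod s) :
    sigmaNu r s * T r s v = T r s (-v.1, v.2) * sigmaNu r s :=
  Equiv.ext fun x => by
    simp [sigmaNu, T_apply, Equiv.Perm.mul_apply, Prod.ext_iff]
    constructor <;> ring

lemma tau_T_mul (v : ZMod r × ZMod s) :
    tau r s * T r s v = T r s (-v) * tau r s :=
  Equiv.ext fun x => by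
    simp [tau, T_apply, Equiv.Perm.mul_apply, Prod.ext_iff]
    constructor <;> ring

lemma mu_mem : mu r s ∈ Hgroup r s :=
  Subgroup.subset_closure (by simp)

lemma sigmaNu_mem : sigmaNu r s ∈ Hgroup r s :=
  Subgroup.subset_closure (by simp)

lemma tau_mem : tau r s ∈ Hgroup r s :=
  Subgroup.subset_closure (by simp)

lemma T_e0_mem (e : ℕ) : T r s ((e : ZMod r), 0) ∈ Hgroup r s := by
  have h : mu r s ^ e = T r s ((e : ZMod r), 0) := by
    rw [mu_eq, T_pow]
    congr 1
    simp [nsmul_eq_mul]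
  rw [← h]; exact pow_mem mu_mem e

lemma T_02d_mem (d : ℕ) : T r s (0, ((2 * d : ℕ) : ZMod s)) ∈ Hgroup r s := by
  have h : (sigmaNu r s * sigmaNu r s) ^ d = T r s (0, ((2 * d : ℕ) : ZMod s)) := by
    rw [sigmaNu_sq, T_pow]
    have hpair : (d • (0 : ZMod r), d • (2 : ZMod s)) = ((0 : ZMod r), ((2 * d : ℕ) : ZMod s)) := by
      rw [smul_zero, nsmul_eq_mul, Prod.mk.injEq]
      refine ⟨rfl, ?_⟩
      push_cast
      ring
    rw [hpair]
  rw [← h]; exact pow_mem (mul_mem sigmaNu_mem sigmaNu_mem) d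

lemma mem_normalizer_zpowers {G : Type*} [Group G] {g c : G}
    (h : c * g * c⁻¹ = g ∨ c * g * c⁻¹ = g⁻¹) :
    c ∈ Subgroup.normalizer (Subgroup.zpowers g : Set G) := by
  have h' : c⁻¹ * g * c = g ∨ c⁻¹ * g * c = g⁻¹ := by
    rcases h with h | h
    · left
      conv_lhs => rw [← h]
      group
    · right
      have h2 : c⁻¹ * g⁻¹ * c = g := by
        conv_lhs => rw [← h]
        group
      calc c⁻¹ * g * c = (c⁻¹ * g⁻¹ * c)⁻¹ := by group
        _ = g⁻¹ := by rw [h2]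
  rw [Subgroup.mem_normalizer_iff]
  intro n
  constructor
  · intro hn
    obtain ⟨k, rfl⟩ := Subgroup.mem_zpowers_iff.mp hn
    rcases h with h | h
    · exact Subgroup.mem_zpowers_iff.mpr ⟨k, by rw [← conj_zpow, h]⟩
    · exact Subgroup.mem_zpowers_iff.mpr ⟨-k, by rw [← conj_zpow, h, inv_zpow, zpow_neg]⟩
  · intro hn
    obtain ⟨k, hk⟩ := Subgroup.mem_zpowers_iff.mp hn
    have hn' : n = c⁻¹ * g ^ k * c := by rw [hk]; group
    have hconj := conj_zpow (i := k) (a := c⁻¹) (b := g)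
    rw [inv_inv] at hconj
    have hn'' : n = (c⁻¹ * g * c) ^ k := hn'.trans hconj.symm
    rcases h' with h2 | h2
    · exact Subgroup.mem_zpowers_iff.mpr ⟨k, by rw [hn'', h2]⟩
    · exact Subgroup.mem_zpowers_iff.mpr ⟨-k, by rw [hn'', h2, inv_zpow, zpow_neg]⟩

lemma H_le_normalizer (v : ZMod r × ZMod s) (hv : v.1 = 0 ∨ v.2 = 0) :
    Hgroup r s ≤ Subgroup.normalizer (Subgroup.zpowers (T r s v) : Set (Equiv.Perm (ZMod r × ZMod s))) := by
  rw [Hgroup, Subgroup.closure_le]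
  rintro c hc
  simp only [Set.mem_insert_iff, Set.mem_singleton_iff] at hc
  have hsnconj : sigmaNu r s * T r s v * (sigmaNu r s)⁻¹ = T r s (-v.1, v.2) := by
    rw [sigmaNu_T_mul, mul_inv_cancel_right]
  have htconj : tau r s * T r s v * (tau r s)⁻¹ = T r s (-v) := by
    rw [tau_T_mul, mul_inv_cancel_right]
  rcases hc with rfl | rfl | rfl
  · refine mem_normalizer_zpowers (Or.inl ?_)
    rw [mu_eq, T_inv, T_mul, T_mul]
    congr 1
    abel
  · rcases hv with h1 | h2
    · refine mem_normalizer_zpowers (Or.inl ?_)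
      rw [hsnconj]
      congr 1
      exact Prod.ext_iff.mpr ⟨by rw [h1, neg_zero], rfl⟩
    · refine mem_normalizer_zpowers (Or.inr ?_)
      rw [hsnconj, T_inv]
      congr 1
      exact Prod.ext_iff.mpr ⟨rfl, by rw [Prod.snd_neg, h2, neg_zero]⟩
  · exact mem_normalizer_zpowers (Or.inr (by rw [htconj, T_inv]))

lemma f_zpow_invariant {α β : Type*} (g : Equiv.Perm α) (f : α → β)
    (hf : ∀ x, f (g x) = f x) : ∀ (m : ℤ) (x : α), f ((g ^ m) x) = f x := by
  have hinv : ∀ x, f (g⁻¹ x) = f x := fun x => by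
    conv_rhs => rw [← show g (g⁻¹ x) = x by rw [← Equiv.Perm.mul_apply, mul_inv_cancel, Equiv.Perm.one_apply]]
    exact (hf (g⁻¹ x)).symm
  intro m
  induction m using Int.induction_on with
  | zero => intro x; simp
  | succ k ih =>
      intro x
      rw [zpow_add_one, Equiv.Perm.mul_apply, ih, hf]
  | pred k ih =>
      intro x
      rw [zpow_sub_one, Equiv.Perm.mul_apply, ih, hinv]

lemma mk_eq_imp {α β : Type*} (g : Equiv.Perm α) (f : α → β)
    (hf : ∀ x, f (g x) = f x) {x y : α}
    (h : Quotient.mk (orbitSetoid (Subgroup.zpowers g)) x =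
      Quotient.mk (orbitSetoid (Subgroup.zpowers g)) y) : f x = f y := by
  have hr : x ∈ MulAction.orbit (Subgroup.zpowers g) y :=
    MulAction.orbitRel_apply.mp (Quotient.exact h)
  obtain ⟨⟨n, hn⟩, hnx⟩ := hr
  obtain ⟨k, rfl⟩ := Subgroup.mem_zpowers_iff.mp hn
  have hx : (g ^ k) y = x := hnx
  rw [← hx, f_zpow_invariant g f hf k y]

lemma one_ne_zero_zmod (c : ℕ) (hc : 2 < c) : (1 : ZMod c) ≠ 0 := by
  intro h
  rw [← Nat.cast_one, ZMod.natCast_eq_zero_iff] at h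
  have := Nat.le_of_dvd one_pos h
  omega

lemma one_ne_neg_one_zmod (c : ℕ) (hc : 2 < c) : (1 : ZMod c) ≠ -1 := by
  intro h
  have h1 : (1 : ZMod c) + 1 = 0 := by linear_combination h
  have h2 : ((2 : ℕ) : ZMod c) = 0 := by push_cast; linear_combination h1
  rw [ZMod.natCast_eq_zero_iff] at h2
  have := Nat.le_of_dvd two_pos h2
  omega

lemma neg_one_ne_zero_zmod (c : ℕ) (hc : 2 < c) : (-1 : ZMod c) ≠ 0 := by
  intro h
  rw [neg_eq_zero] at h
  exact one_ne_zero_zmod c hc h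

/-- The key refutation lemma: if a suitable nontrivial translation in `H(r,s)` has quotient
invariants modulo `a > 2` and `b > 2`, then `(Γ(r,s), H(r,s))` is not basic. -/
lemma key_lemma (r s a b : ℕ) (hr : 3 ≤ r) (hs : 3 ≤ s) (ha : a ∣ r) (hb : b ∣ s)
    (ha2 : 2 < a) (hb2 : 2 < b) (v : ZMod r × ZMod s) (hv0 : v ≠ 0)
    (hca : ZMod.castHom ha (ZMod a) v.1 = 0) (hcb : ZMod.castHom hb (ZMod b) v.2 = 0)
    (hvH : T r s v ∈ Hgroup r s) (hvshape : v.1 = 0 ∨ v.2 = 0)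
    (hbasic : IsBasic (Gamma r s) (Hgroup r s)) : False := by
  haveI : NeZero r := ⟨by omega⟩
  haveI : NeZero s := ⟨by omega⟩
  set N : Subgroup (Equiv.Perm (ZMod r × ZMod s)) := Subgroup.zpowers (T r s v) with hN
  set f : ZMod r × ZMod s → ZMod a × ZMod b :=
    fun x => (ZMod.castHom ha (ZMod a) x.1, ZMod.castHom hb (ZMod b) x.2) with hfdef
  have hf : ∀ x, f (T r s v x) = f x := by
    intro x
    simp only [hfdef, T_apply, Prod.fst_add, Prod.snd_add, map_add, hca, hcb, add_zero]
  have hmk : ∀ x y : ZMod r × ZMod s,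
      Quotient.mk (orbitSetoid N) x = Quotient.mk (orbitSetoid N) y → f x = f y :=
    fun x y h => mk_eq_imp (T r s v) f hf h
  have hnormal : NormalIn N (Hgroup r s) :=
    ⟨Subgroup.zpowers_le.mpr hvH,
      fun h hH n hn => (Subgroup.mem_normalizer_iff.mp
        (H_le_normalizer v hvshape hH) n).mp hn⟩
  have hbot : N ≠ ⊥ := by
    rw [hN, Ne, Subgroup.zpowers_eq_bot]
    intro h
    apply hv0
    have h0 := congrArg (fun (p : Equiv.Perm (ZMod r × ZMod s)) => p 0) h
    simpa [T_apply] using h0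
  -- the four relevant vertices
  set x0 : ZMod r × ZMod s := (0, 0) with hx0
  set p1 : ZMod r × ZMod s := (1, 1) with hp1
  set p2 : ZMod r × ZMod s := (1, -1) with hp2
  set p3 : ZMod r × ZMod s := (-1, 1) with hp3
  have hf0 : f x0 = (0, 0) := by
    show ((ZMod.castHom ha (ZMod a)) 0, (ZMod.castHom hb (ZMod b)) 0) = (0, 0)
    rw [map_zero, map_zero]
  have hf1 : f p1 = (1, 1) := by
    show ((ZMod.castHom ha (ZMod a)) 1, (ZMod.castHom hb (ZMod b)) 1) = (1, 1)
    rw [map_one, map_one]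
  have hf2 : f p2 = (1, -1) := by
    show ((ZMod.castHom ha (ZMod a)) 1, (ZMod.castHom hb (ZMod b)) (-1)) = (1, -1)
    rw [map_one, map_neg, map_one]
  have hf3 : f p3 = (-1, 1) := by
    show ((ZMod.castHom ha (ZMod a)) (-1), (ZMod.castHom hb (ZMod b)) 1) = (-1, 1)
    rw [map_one, map_neg, map_one]
  have h1a := one_ne_zero_zmod a ha2
  have h1b := one_ne_zero_zmod b hb2
  have h2a := one_ne_neg_one_zmod a ha2
  have h2b := one_ne_neg_one_zmod b hb2
  have hne : ∀ x y : ZMod r × ZMod s, f x ≠ f y →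
      Quotient.mk (orbitSetoid N) x ≠ Quotient.mk (orbitSetoid N) y :=
    fun x y h hxy => h (hmk x y hxy)
  have hd01 : Quotient.mk (orbitSetoid N) x0 ≠ Quotient.mk (orbitSetoid N) p1 :=
    hne _ _ (by rw [hf0, hf1]; intro h; exact h1a (congrArg Prod.fst h).symm)
  have hd02 : Quotient.mk (orbitSetoid N) x0 ≠ Quotient.mk (orbitSetoid N) p2 :=
    hne _ _ (by rw [hf0, hf2]; intro h; exact h1a (congrArg Prod.fst h).symm)
  have hd03 : Quotient.mk (orbitSetoid N) x0 ≠ Quotient.mk (orbitSetoid N) p3 :=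
    hne _ _ (by rw [hf0, hf3]; intro h; exact h1b (congrArg Prod.snd h).symm)
  have hd12 : Quotient.mk (orbitSetoid N) p1 ≠ Quotient.mk (orbitSetoid N) p2 :=
    hne _ _ (by rw [hf1, hf2]; intro h; exact h2b (congrArg Prod.snd h))
  have hd13 : Quotient.mk (orbitSetoid N) p1 ≠ Quotient.mk (orbitSetoid N) p3 :=
    hne _ _ (by rw [hf1, hf3]; intro h; exact h2a (congrArg Prod.fst h))
  have hd23 : Quotient.mk (orbitSetoid N) p2 ≠ Quotient.mk (orbitSetoid N) p3 :=
    hne _ _ (by rw [hf2, hf3]; intro h; exact h2a (congrArg Prod.fst h))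
  -- adjacency in the quotient
  have hadj : ∀ y : ZMod r × ZMod s,
      Quotient.mk (orbitSetoid N) x0 ≠ Quotient.mk (orbitSetoid N) y →
      gammaRel r s x0 y →
      (quotientGraph (Gamma r s) N).Adj (Quotient.mk (orbitSetoid N) x0)
        (Quotient.mk (orbitSetoid N) y) := by
    intro y hneq hrel
    rw [quotientGraph, SimpleGraph.fromRel_adj]
    refine ⟨hneq, Or.inl ⟨x0, y, rfl, rfl, ?_⟩⟩
    rw [Gamma, SimpleGraph.fromRel_adj]
    exact ⟨fun h => hneq (by rw [h]), Or.inl hrel⟩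
  have hrel1 : gammaRel r s x0 p1 := ⟨Or.inl (by simp [hx0, hp1]), Or.inl (by simp [hx0, hp1])⟩
  have hrel2 : gammaRel r s x0 p2 := ⟨Or.inl (by simp [hx0, hp2]), Or.inr (by simp [hx0, hp2])⟩
  have hrel3 : gammaRel r s x0 p3 := ⟨Or.inr (by simp [hx0, hp3]), Or.inl (by simp [hx0, hp3])⟩
  have hadj1 := hadj p1 hd01 hrel1
  have hadj2 := hadj p2 hd02 hrel2
  have hadj3 := hadj p3 hd03 hrel3
  rcases hbasic N hnormal hbot with hcard | hcyc
  · -- at least 3 orbits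
    haveI : Finite (Quotient (orbitSetoid N)) := Quotient.finite _
    have hinj : Function.Injective
        (![Quotient.mk (orbitSetoid N) x0, Quotient.mk (orbitSetoid N) p1,
           Quotient.mk (orbitSetoid N) p3] : Fin 3 → Quotient (orbitSetoid N)) := by
      intro i j hij
      fin_cases i <;> fin_cases j <;>
        simp only [Matrix.cons_val_zero, Matrix.cons_val_one, Matrix.head_cons,
          Matrix.cons_val_two, Matrix.tail_cons, Fin.mk_zero, Fin.mk_one] at hij ⊢ <;>
        first
          | rfl
          | exact absurd hij hd01
          | exact absurd hij hd03
          | exact absurd hij hd13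
          | exact absurd hij.symm hd01
          | exact absurd hij.symm hd03
          | exact absurd hij.symm hd13
    have hle := Nat.card_le_card_of_injective _ hinj
    rw [Nat.card_eq_fintype_card (α := Fin 3), Fintype.card_fin] at hle
    omega
  · obtain ⟨m, hm3, ⟨φ⟩⟩ := hcyc
    obtain ⟨k, rfl⟩ : ∃ k, m = k + 2 := ⟨m - 2, by omega⟩
    have hu1 : (cycleGraph (k + 2)).Adj (φ (Quotient.mk (orbitSetoid N) x0))
        (φ (Quotient.mk (orbitSetoid N) p1)) := φ.map_adj_iff.mpr hadj1
    have hu2 : (cycleGraph (k + 2)).Adj (φ (Quotient.mk (orbitSetoid N) x0))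
        (φ (Quotient.mk (orbitSetoid N) p2)) := φ.map_adj_iff.mpr hadj2
    have hu3 : (cycleGraph (k + 2)).Adj (φ (Quotient.mk (orbitSetoid N) x0))
        (φ (Quotient.mk (orbitSetoid N) p3)) := φ.map_adj_iff.mpr hadj3
    set u := φ (Quotient.mk (orbitSetoid N) x0)
    set w1 := φ (Quotient.mk (orbitSetoid N) p1)
    set w2 := φ (Quotient.mk (orbitSetoid N) p2)
    set w3 := φ (Quotient.mk (orbitSetoid N) p3)
    have hw12 : w1 ≠ w2 := fun h => hd12 (φ.toEquiv.injective h)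
    have hw13 : w1 ≠ w3 := fun h => hd13 (φ.toEquiv.injective h)
    have hw23 : w2 ≠ w3 := fun h => hd23 (φ.toEquiv.injective h)
    have hcases : ∀ w : Fin (k + 2), (cycleGraph (k + 2)).Adj u w → w = u - 1 ∨ w = u + 1 := by
      intro w hw
      letI := Fin.instCommRing (k + 2)
      rcases cycleGraph_adj.mp hw with h | h
      · left; linear_combination -h
      · right; linear_combination h
    rcases hcases w1 hu1 with e1 | e1 <;> rcases hcases w2 hu2 with e2 | e2 <;>
      rcases hcases w3 hu3 with e3 | e3 <;>
      first
        | exact hw12 (e1.trans e2.symm)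
        | exact hw13 (e1.trans e3.symm)
        | exact hw23 (e2.trans e3.symm)

end Aux

/-- if `(Γ(r,s), H(r,s))` (with `r,s ≥ 3`, `r` odd, `s` even) is basic of cycle
type, then `(r,s)` is `(p,4)` or `(p,2q)` for odd primes `p`, `q`. -/
theorem stmt2 (r s : ℕ) (hr : 3 ≤ r) (hs : 3 ≤ s) (hro : Odd r) (hse : 2 ∣ s)
    (hbasic : BasicOfCycleType (Gamma r s) (Hgroup r s)) :
    (∃ p : ℕ, p.Prime ∧ Odd p ∧ r = p ∧ s = 4) ∨
      (∃ p q : ℕ, p.Prime ∧ Odd p ∧ q.Prime ∧ Odd q ∧ r = p ∧ s = 2 * q) := by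
  obtain ⟨hbasic1, -⟩ := hbasic
  -- r is prime
  have hrp : r.Prime := by
    by_contra hnp
    obtain ⟨e, he, h2e, her⟩ := Nat.exists_dvd_of_not_prime2 (by omega) hnp
    have he2 : ¬ 2 ∣ e := fun h => (Nat.not_even_iff_odd.mpr hro)
      (even_iff_two_dvd.mpr (h.trans he))
    have he3 : 2 < e := by omega
    have hv0 : ((e : ZMod r), (0 : ZMod s)) ≠ 0 := by
      intro h
      have h1 : (e : ZMod r) = 0 := congrArg Prod.fst h
      rw [ZMod.natCast_eq_zero_iff] at h1
      have := Nat.le_of_dvd (by omega) h1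
      omega
    exact key_lemma r s e s hr hs he dvd_rfl he3 (by omega)
      ((e : ZMod r), 0) hv0
      (by rw [map_natCast, ZMod.natCast_self])
      (by rw [map_zero])
      (T_e0_mem e) (Or.inr rfl) hbasic1
  obtain ⟨t, rfl⟩ := hse
  -- t is prime
  have htp : t.Prime := by
    by_contra hnp
    have ht2 : 2 ≤ t := by omega
    obtain ⟨w, hw, h2w, hwt⟩ := Nat.exists_dvd_of_not_prime2 ht2 hnp
    have hv0 : ((0 : ZMod r), ((2 * w : ℕ) : ZMod (2 * t))) ≠ 0 := by
      intro h
      have h1 : ((2 * w : ℕ) : ZMod (2 * t)) = 0 := congrArg Prod.snd h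
      rw [ZMod.natCast_eq_zero_iff] at h1
      have := Nat.le_of_dvd (by omega) h1
      omega
    exact key_lemma r (2 * t) r (2 * w) hr hs dvd_rfl
      (mul_dvd_mul_left 2 hw) (by omega) (by omega)
      (0, ((2 * w : ℕ) : ZMod (2 * t))) hv0
      (by rw [map_zero])
      (by rw [map_natCast, ZMod.natCast_self])
      (T_02d_mem w) (Or.inl rfl) hbasic1
  rcases eq_or_ne t 2 with rfl | ht2
  · exact Or.inl ⟨r, hrp, hro, rfl, by norm_num⟩
  · exact Or.inr ⟨r, t, hrp, hro, htp, htp.odd_of_ne_two ht2, rfl, rfl⟩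

end OG4
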